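/- For every n ≥ 1 and every integer m with 0 ≤ m ≤ n − 1, the Morse–Hedlund (Thue–Morse) sequence splits the first 2^n natural numbers into two sets with equal power sums: Σ_{i=0}^{2^n − 1} (−1)^{s₂(i)} · i^m = 0, where s₂(i) denotes the number of ones in the binary expansion of i. Equivalently, the sum of i^m over those i in {0, 1, ..., 2^n − 1} whose binary digit sum is even equals the sum of i^m over those i whose binary digit sum is odd. -/

import Mathlib

/-- `s₂ i` is the number of ones in the binary expansion of `i` (the sum of its binary
digits); the Thue–Morse (Morse–Hedlund) sequence assigns to `i` the parity of `s₂ i`. -/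
def binaryDigitSum (i : ℕ) : ℕ := (Nat.digits 2 i).sum

lemma binaryDigitSum_add_pow {n i : ℕ} (hi : i < 2 ^ n) :
    binaryDigitSum (i + 2 ^ n) = binaryDigitSum i + 1 := by
  have hlen : (Nat.digits 2 i).length ≤ n := by
    rcases Nat.eq_zero_or_pos i with rfl | hpos
    · simp
    · rw [Nat.digits_len 2 i one_lt_two hpos.ne']
      have := Nat.log_lt_of_lt_pow hpos.ne' hi
      omega
  have key := Nat.digits_append_zeroes_append_digits
      (b := 2) (k := n - (Nat.digits 2 i).length) (m := 1) (n := i) one_lt_two one_pos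
  rw [Nat.add_sub_cancel' hlen] at key
  have : Nat.digits 2 (i + 2 ^ n * 1) =
      Nat.digits 2 i ++ List.replicate (n - (Nat.digits 2 i).length) 0 ++ Nat.digits 2 1 :=
    key.symm
  unfold binaryDigitSum
  rw [mul_one] at this
  rw [this]
  simp [List.sum_append]

lemma thue_morse_aux : ∀ n : ℕ, ∀ m < n,
    ∑ i ∈ Finset.range (2 ^ n), (-1 : ℝ) ^ binaryDigitSum i * (i : ℝ) ^ m = 0 := by
  intro n
  induction n with
  | zero => intro m hm; omega
  | succ n ih =>
    intro m hm
    have hmn : m ≤ n := Nat.lt_succ_iff.mp hm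
    have hsplit : 2 ^ (n + 1) = 2 ^ n + 2 ^ n := by ring
    rw [hsplit, Finset.sum_range_add]
    have h2 : ∀ i ∈ Finset.range (2 ^ n),
        (-1 : ℝ) ^ binaryDigitSum (2 ^ n + i) * ((2 ^ n + i : ℕ) : ℝ) ^ m
        = -((-1 : ℝ) ^ binaryDigitSum i * ((i : ℝ) + (2 ^ n : ℝ)) ^ m) := by
      intro i hi
      rw [Finset.mem_range] at hi
      rw [add_comm (2 ^ n) i, binaryDigitSum_add_pow hi, pow_succ]
      push_cast
      ring
    rw [Finset.sum_congr rfl h2, Finset.sum_neg_distrib]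
    have hexp : ∀ i ∈ Finset.range (2 ^ n),
        (-1 : ℝ) ^ binaryDigitSum i * ((i : ℝ) + (2 ^ n : ℝ)) ^ m
        = ∑ k ∈ Finset.range (m + 1),
            ((-1 : ℝ) ^ binaryDigitSum i * (i : ℝ) ^ k) *
              ((2 ^ n : ℝ) ^ (m - k) * (m.choose k : ℝ)) := by
      intro i _
      rw [add_pow, Finset.mul_sum]
      apply Finset.sum_congr rfl
      intro k _
      ring
    rw [Finset.sum_congr rfl hexp, Finset.sum_comm]
    have hinner : ∀ k ∈ Finset.range (m + 1),
        ∑ i ∈ Finset.range (2 ^ n),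
          ((-1 : ℝ) ^ binaryDigitSum i * (i : ℝ) ^ k) *
            ((2 ^ n : ℝ) ^ (m - k) * (m.choose k : ℝ))
        = (∑ i ∈ Finset.range (2 ^ n), (-1 : ℝ) ^ binaryDigitSum i * (i : ℝ) ^ k) *
            ((2 ^ n : ℝ) ^ (m - k) * (m.choose k : ℝ)) := by
      intro k _
      rw [← Finset.sum_mul]
    rw [Finset.sum_congr rfl hinner]
    rw [Finset.sum_range_succ]
    have hlow : ∀ k ∈ Finset.range m,
        (∑ i ∈ Finset.range (2 ^ n), (-1 : ℝ) ^ binaryDigitSum i * (i : ℝ) ^ k) *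
          ((2 ^ n : ℝ) ^ (m - k) * (m.choose k : ℝ)) = 0 := by
      intro k hk
      rw [Finset.mem_range] at hk
      rw [ih k (lt_of_lt_of_le hk hmn), zero_mul]
    rw [Finset.sum_congr rfl hlow, Finset.sum_const, smul_zero, zero_add]
    simp

theorem thue_morse_power_sums (n : ℕ) (hn : 1 ≤ n) (m : ℕ) (hm : m ≤ n - 1) :
    ∑ i ∈ Finset.range (2 ^ n), (-1 : ℝ) ^ binaryDigitSum i * (i : ℝ) ^ m = 0 := by
  exact thue_morse_aux n m (by omega)
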